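/- Strong normalization for the simply-typed λ-calculus: if [] ⊢ M : A, then M is strongly normalizing with respect to one-step β-reduction. -/

import Mathlib

inductive Ty : Type
  | iota : Ty
  | arr : Ty → Ty → Ty

inductive Tm : Type
  | var : ℕ → Tm
  | const : Tm
  | app : Tm → Tm → Tm
  | abs : Ty → Tm → Tm

def liftRen (ρ : ℕ → ℕ) : ℕ → ℕ
  | 0 => 0
  | n + 1 => ρ n + 1

def rename (ρ : ℕ → ℕ) : Tm → Tm
  | Tm.var n => Tm.var (ρ n)
  | Tm.const => Tm.const
  | Tm.app m n => Tm.app (rename ρ m) (rename ρ n)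
  | Tm.abs a r => Tm.abs a (rename (liftRen ρ) r)

def liftSub (σ : ℕ → Tm) : ℕ → Tm
  | 0 => Tm.var 0
  | n + 1 => rename Nat.succ (σ n)

/-- Simultaneous capture-avoiding substitution. -/
def subst (σ : ℕ → Tm) : Tm → Tm
  | Tm.var n => σ n
  | Tm.const => Tm.const
  | Tm.app m n => Tm.app (subst σ m) (subst σ n)
  | Tm.abs a r => Tm.abs a (subst (liftSub σ) r)

/-- `subst0 s t` is `t[0 := s]`. -/
def subst0 (s : Tm) (t : Tm) : Tm :=
  subst (fun n => match n with | 0 => s | Nat.succ k => Tm.var k) t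

inductive Typed : List Ty → Tm → Ty → Prop
  | var {Γ : List Ty} {n : ℕ} {a : Ty} :
      Γ[n]? = some a → Typed Γ (Tm.var n) a
  | const {Γ : List Ty} {a : Ty} : Typed Γ Tm.const a
  | app {Γ : List Ty} {m n : Tm} {a b : Ty} :
      Typed Γ m (Ty.arr a b) → Typed Γ n a → Typed Γ (Tm.app m n) b
  | abs {Γ : List Ty} {r : Tm} {a b : Ty} :
      Typed (a :: Γ) r b → Typed Γ (Tm.abs a r) (Ty.arr a b)

/-- One-step (β) reduction. -/
inductive Step : Tm → Tm → Prop
  | beta {a : Ty} {r m : Tm} : Step (Tm.app (Tm.abs a r) m) (subst0 m r)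
  | appl {m m' n : Tm} : Step m m' → Step (Tm.app m n) (Tm.app m' n)
  | appr {m n n' : Tm} : Step n n' → Step (Tm.app m n) (Tm.app m n')
  | abs {a : Ty} {r r' : Tm} : Step r r' → Step (Tm.abs a r) (Tm.abs a r')

/-- Strong normalization. -/
inductive SN : Tm → Prop
  | intro {M : Tm} : (∀ M', Step M M' → SN M') → SN M

/-- Tait-style reducibility, by recursion on the type. -/
def Red : Tm → Ty → Prop
  | M, Ty.iota => Typed [] M Ty.iota ∧ SN M
  | M, Ty.arr a b => Typed [] M (Ty.arr a b) ∧ ∀ U, Red U a → Red (Tm.app M U) b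

/-! ### Substitution calculus -/

theorem liftRen_ext {ρ ρ' : ℕ → ℕ} (h : ∀ n, ρ n = ρ' n) : ∀ n, liftRen ρ n = liftRen ρ' n
  | 0 => rfl
  | n + 1 => by simp [liftRen, h n]

theorem rename_ext {ρ ρ' : ℕ → ℕ} (h : ∀ n, ρ n = ρ' n) : ∀ t, rename ρ t = rename ρ' t
  | Tm.var n => by simp [rename, h n]
  | Tm.const => rfl
  | Tm.app m n => by simp [rename, rename_ext h m, rename_ext h n]
  | Tm.abs a r => by simp [rename, rename_ext (liftRen_ext h) r]

theorem liftSub_ext {σ σ' : ℕ → Tm} (h : ∀ n, σ n = σ' n) : ∀ n, liftSub σ n = liftSub σ' n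
  | 0 => rfl
  | n + 1 => by simp [liftSub, h n]

theorem subst_ext {σ σ' : ℕ → Tm} (h : ∀ n, σ n = σ' n) : ∀ t, subst σ t = subst σ' t
  | Tm.var n => h n
  | Tm.const => rfl
  | Tm.app m n => by simp [subst, subst_ext h m, subst_ext h n]
  | Tm.abs a r => by simp [subst, subst_ext (liftSub_ext h) r]

theorem liftRen_comp (ρ ρ' : ℕ → ℕ) : ∀ n, liftRen ρ (liftRen ρ' n) = liftRen (fun k => ρ (ρ' k)) n
  | 0 => rfl
  | _ + 1 => rfl

theorem rename_rename (ρ ρ' : ℕ → ℕ) : ∀ t, rename ρ (rename ρ' t) = rename (fun n => ρ (ρ' n)) t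
  | Tm.var n => rfl
  | Tm.const => rfl
  | Tm.app m n => by simp [rename, rename_rename ρ ρ' m, rename_rename ρ ρ' n]
  | Tm.abs a r => by
      simp only [rename, rename_rename (liftRen ρ) (liftRen ρ') r]
      exact congrArg _ (rename_ext (liftRen_comp ρ ρ') r)

theorem subst_rename (σ : ℕ → Tm) (ρ : ℕ → ℕ) :
    ∀ t, subst σ (rename ρ t) = subst (fun n => σ (ρ n)) t
  | Tm.var n => rfl
  | Tm.const => rfl
  | Tm.app m n => by simp [rename, subst, subst_rename σ ρ m, subst_rename σ ρ n]
  | Tm.abs a r => by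
      simp only [rename, subst, subst_rename (liftSub σ) (liftRen ρ) r]
      refine congrArg _ (subst_ext (fun n => ?_) r)
      cases n <;> rfl

theorem rename_subst (ρ : ℕ → ℕ) (σ : ℕ → Tm) :
    ∀ t, rename ρ (subst σ t) = subst (fun n => rename ρ (σ n)) t
  | Tm.var n => rfl
  | Tm.const => rfl
  | Tm.app m n => by simp [rename, subst, rename_subst ρ σ m, rename_subst ρ σ n]
  | Tm.abs a r => by
      simp only [rename, subst, rename_subst (liftRen ρ) (liftSub σ) r]
      refine congrArg _ (subst_ext (fun n => ?_) r)
      cases n with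
      | zero => rfl
      | succ n =>
          show rename (liftRen ρ) (rename Nat.succ (σ n)) = rename Nat.succ (rename ρ (σ n))
          rw [rename_rename, rename_rename]
          exact rename_ext (fun k => rfl) (σ n)

theorem subst_subst (σ τ : ℕ → Tm) :
    ∀ t, subst σ (subst τ t) = subst (fun n => subst σ (τ n)) t
  | Tm.var n => rfl
  | Tm.const => rfl
  | Tm.app m n => by simp [subst, subst_subst σ τ m, subst_subst σ τ n]
  | Tm.abs a r => by
      simp only [subst, subst_subst (liftSub σ) (liftSub τ) r]
      refine congrArg _ (subst_ext (fun n => ?_) r)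
      cases n with
      | zero => rfl
      | succ n =>
          show subst (liftSub σ) (rename Nat.succ (τ n)) = rename Nat.succ (subst σ (τ n))
          rw [subst_rename, rename_subst]
          exact subst_ext (fun k => rfl) (τ n)

theorem subst_id : ∀ t, subst Tm.var t = t
  | Tm.var n => rfl
  | Tm.const => rfl
  | Tm.app m n => by simp [subst, subst_id m, subst_id n]
  | Tm.abs a r => by
      simp only [subst]
      rw [subst_ext (fun n => by cases n <;> rfl : ∀ n, liftSub Tm.var n = Tm.var n) r,
        subst_id r]

/-- Cons of a term onto a substitution. -/
def consSub (s : Tm) (σ : ℕ → Tm) : ℕ → Tm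
  | 0 => s
  | n + 1 => σ n

theorem subst0_eq (s t : Tm) : subst0 s t = subst (consSub s Tm.var) t :=
  subst_ext (fun n => by cases n <;> rfl) t

theorem subst0_subst (s : Tm) (σ : ℕ → Tm) (t : Tm) :
    subst0 s (subst (liftSub σ) t) = subst (consSub s σ) t := by
  rw [subst0_eq, subst_subst]
  refine subst_ext (fun n => ?_) t
  cases n with
  | zero => rfl
  | succ n =>
      show subst (consSub s Tm.var) (rename Nat.succ (σ n)) = σ n
      rw [subst_rename]
      exact (subst_ext (fun k => rfl) (σ n)).trans (subst_id (σ n))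

theorem subst_subst0 (σ : ℕ → Tm) (m r : Tm) :
    subst σ (subst0 m r) = subst0 (subst σ m) (subst (liftSub σ) r) := by
  rw [subst0_eq, subst_subst, subst0_subst]
  refine subst_ext (fun n => ?_) r
  cases n <;> rfl

/-- Reduction is closed under substitution. -/
theorem step_subst {t t' : Tm} (st : Step t t') : ∀ σ, Step (subst σ t) (subst σ t') := by
  induction st with
  | @beta a r m =>
      intro σ
      show Step (Tm.app (Tm.abs a (subst (liftSub σ) r)) (subst σ m)) _
      rw [subst_subst0]
      exact Step.beta
  | appl _ ih => exact fun σ => Step.appl (ih σ)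
  | appr _ ih => exact fun σ => Step.appr (ih σ)
  | abs _ ih => exact fun σ => Step.abs (ih (liftSub _))

/-! ### Typing lemmas -/

theorem typed_rename : ∀ {Γ t a}, Typed Γ t a → ∀ {Δ : List Ty} {ρ : ℕ → ℕ},
    (∀ n b, Γ[n]? = some b → Δ[ρ n]? = some b) → Typed Δ (rename ρ t) a := by
  intro Γ t a ht
  induction ht with
  | var h => exact fun hρ => Typed.var (hρ _ _ h)
  | const => exact fun _ => Typed.const
  | app _ _ ih1 ih2 => exact fun hρ => Typed.app (ih1 hρ) (ih2 hρ)
  | @abs Γ r a b _ ih =>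
      intro Δ ρ hρ
      refine Typed.abs (ih (fun n c hn => ?_))
      cases n with
      | zero => exact hn
      | succ n => exact hρ n c hn

theorem typed_subst : ∀ {Γ t a}, Typed Γ t a → ∀ {Δ : List Ty} {σ : ℕ → Tm},
    (∀ n b, Γ[n]? = some b → Typed Δ (σ n) b) → Typed Δ (subst σ t) a := by
  intro Γ t a ht
  induction ht with
  | var h => exact fun hσ => hσ _ _ h
  | const => exact fun _ => Typed.const
  | app _ _ ih1 ih2 => exact fun hσ => Typed.app (ih1 hσ) (ih2 hσ)
  | @abs Γ r a b _ ih =>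
      intro Δ σ hσ
      refine Typed.abs (ih (fun n c hn => ?_))
      cases n with
      | zero => exact Typed.var hn
      | succ n => exact typed_rename (hσ n c hn) (fun k d hk => hk)

theorem typed_subst0 {Γ : List Ty} {r m : Tm} {a b : Ty}
    (hr : Typed (a :: Γ) r b) (hm : Typed Γ m a) : Typed Γ (subst0 m r) b := by
  refine typed_subst hr (fun n c hn => ?_)
  cases n with
  | zero =>
      obtain rfl : a = c := by simpa using hn
      exact hm
  | succ n => exact Typed.var hn

theorem preservation : ∀ {M M' : Tm}, Step M M' → ∀ {Γ A}, Typed Γ M A → Typed Γ M' A := by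
  intro M M' st
  induction st with
  | beta =>
      intro Γ A h
      cases h with
      | app h1 h2 => cases h1 with | abs h3 => exact typed_subst0 h3 h2
  | appl _ ih =>
      intro Γ A h
      cases h with | app h1 h2 => exact Typed.app (ih h1) h2
  | appr _ ih =>
      intro Γ A h
      cases h with | app h1 h2 => exact Typed.app h1 (ih h2)
  | abs _ ih =>
      intro Γ A h
      cases h with | abs h1 => exact Typed.abs (ih h1)

/-! ### SN lemmas -/

theorem sn_step {M M' : Tm} (h : SN M) (st : Step M M') : SN M' := by
  cases h with | intro f => exact f M' st

theorem sn_of_subst {σ : ℕ → Tm} {t : Tm} (h : SN (subst σ t)) : SN t := by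
  generalize e : subst σ t = u at h
  induction h generalizing t with
  | intro f ih =>
      subst e
      exact SN.intro fun t' st => ih _ (step_subst st σ) rfl

theorem sn_appl {M N : Tm} (h : SN (Tm.app M N)) : SN M := by
  generalize e : Tm.app M N = u at h
  induction h generalizing M with
  | intro f ih =>
      subst e
      exact SN.intro fun M' st => ih _ (Step.appl st) rfl

/-! ### Reducibility -/

theorem red_typed : ∀ {a M}, Red M a → Typed [] M a := by
  intro a M h
  cases a <;> exact h.1

theorem cr : ∀ a : Ty,
    (∀ M, Red M a → SN M) ∧
    (∀ M M', Red M a → Step M M' → Red M' a) ∧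
    (∀ M, (∀ b r, M ≠ Tm.abs b r) → Typed [] M a → (∀ M', Step M M' → Red M' a) → Red M a) ∧
    Red Tm.const a := by
  intro a
  induction a with
  | iota =>
      refine ⟨fun M h => h.2,
        fun M M' h st => ⟨preservation st h.1, sn_step h.2 st⟩,
        fun M _ hty h => ⟨hty, SN.intro fun M' st => (h M' st).2⟩,
        ⟨Typed.const, SN.intro fun M' st => nomatch st⟩⟩
  | arr a b iha ihb =>
      obtain ⟨cr1a, cr2a, _cr3a, rca⟩ := iha
      obtain ⟨cr1b, cr2b, cr3b, _rcb⟩ := ihb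
      have rc : Red Tm.const (Ty.arr a b) := by
        refine ⟨Typed.const, fun U hU => ?_⟩
        have aux : ∀ U, SN U → Red U a → Red (Tm.app Tm.const U) b := by
          intro U hsn
          induction hsn with
          | intro f ih =>
              intro hU
              refine cr3b _ (fun _ _ h => Tm.noConfusion h)
                (Typed.app Typed.const (red_typed hU)) ?_
              intro M' st
              cases st with
              | appl st' => exact nomatch st'
              | appr st' => exact ih _ st' (cr2a _ _ hU st')
        exact aux U (cr1a U hU) hU
      have cr1 : ∀ M, Red M (Ty.arr a b) → SN M := fun M h =>
        sn_appl (cr1b _ (h.2 Tm.const rca))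
      have cr2 : ∀ M M', Red M (Ty.arr a b) → Step M M' → Red M' (Ty.arr a b) :=
        fun M M' h st =>
          ⟨preservation st h.1, fun U hU => cr2b _ _ (h.2 U hU) (Step.appl st)⟩
      refine ⟨cr1, cr2, fun M hne hty h => ⟨hty, fun U hU => ?_⟩, rc⟩
      have aux : ∀ U, SN U → Red U a → Red (Tm.app M U) b := by
        intro U hsn
        induction hsn with
        | intro f ih =>
            intro hU
            refine cr3b _ (fun _ _ h => Tm.noConfusion h)
              (Typed.app hty (red_typed hU)) ?_
            intro M' st
            cases st with
            | beta => exact absurd rfl (hne _ _)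
            | appl st' => exact (h _ st').2 _ hU
            | appr st' => exact ih _ st' (cr2a _ _ hU st')
      exact aux U (cr1a U hU) hU

theorem red_abs {a b : Ty} {r : Tm} (hty : Typed [a] r b)
    (h : ∀ U, Red U a → Red (subst0 U r) b) : Red (Tm.abs a r) (Ty.arr a b) := by
  refine ⟨Typed.abs hty, fun U hU => ?_⟩
  have snr : SN r := sn_of_subst ((cr b).1 _ (h Tm.const (cr a).2.2.2))
  have snU : SN U := (cr a).1 _ hU
  have aux : ∀ r, SN r → ∀ U, SN U → Typed [a] r b →
      (∀ V, Red V a → Red (subst0 V r) b) → Red U a → Red (Tm.app (Tm.abs a r) U) b := by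
    intro r hr
    induction hr with
    | intro fr ihr =>
        intro U hU
        induction hU with
        | intro fU ihU =>
            intro hty h hUred
            refine (cr b).2.2.1 _ (fun _ _ h => Tm.noConfusion h)
              (Typed.app (Typed.abs hty) (red_typed hUred)) ?_
            intro M' st
            cases st with
            | beta => exact h _ hUred
            | appl st' =>
                cases st' with
                | abs str =>
                    exact ihr _ str _ (SN.intro fU) (preservation str hty)
                      (fun V hV => (cr b).2.1 _ _ (h V hV) (step_subst str _)) hUred
            | appr st' => exact ihU _ st' hty h ((cr a).2.1 _ _ hUred st')
  exact aux r snr U snU hty h hU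

theorem fundamental : ∀ {Γ M A}, Typed Γ M A → ∀ σ : ℕ → Tm,
    (∀ n a, Γ[n]? = some a → Red (σ n) a) → Red (subst σ M) A := by
  intro Γ M A ht
  induction ht with
  | var h => exact fun σ hσ => hσ _ _ h
  | const => exact fun σ _ => (cr _).2.2.2
  | app _ _ ih1 ih2 => exact fun σ hσ => (ih1 σ hσ).2 _ (ih2 σ hσ)
  | @abs Γ r a b h ih =>
      intro σ hσ
      show Red (Tm.abs a (subst (liftSub σ) r)) (Ty.arr a b)
      refine red_abs ?_ ?_
      · refine typed_subst h (fun n c hn => ?_)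
        cases n with
        | zero =>
            obtain rfl : a = c := by simpa using hn
            exact Typed.var rfl
        | succ n => exact typed_rename (red_typed (hσ n c hn)) (fun k d hk => nomatch hk)
      · intro U hU
        rw [subst0_subst]
        refine ih (consSub U σ) (fun n c hn => ?_)
        cases n with
        | zero =>
            obtain rfl : a = c := by simpa using hn
            exact hU
        | succ n => exact hσ n c hn

theorem strong_normalization {M : Tm} {A : Ty} (ht : Typed [] M A) : SN M := by
  have h := fundamental ht Tm.var (fun n a hn => nomatch hn)
  rw [subst_id] at h
  exact (cr A).1 _ h
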